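/- Let ν > −1. The inequalities (1−p)/ℐ_{ν+1}(x) + p·ℐ_ν(x)/ℐ_{ν+1}(x) > 1 > (1−q)/ℐ_{ν+1}(x) + q·ℐ_ν(x)/ℐ_{ν+1}(x) hold for all x in (0, ∞) if and only if p ≥ (ν+1)/(ν+2) and q ≤ 0. -/

import Mathlib

open Real

/-- The normalized modified Bessel function of the first kind,
`ℐ_ν(x) = 2^ν Γ(ν+1) x^{-ν} I_ν(x) = ∑ (1/4)^n x^(2n) / ((ν+1)_n n!)`. -/
noncomputable def besselIn (ν x : ℝ) : ℝ :=
  ∑' n : ℕ, ((1 / 4 : ℝ) ^ n * x ^ (2 * n)) * Real.Gamma (ν + 1) /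
    (Real.Gamma (ν + n + 1) * n.factorial)

namespace BesselAux

/-- coefficient -/
noncomputable def d (ν : ℝ) (n : ℕ) : ℝ :=
  Real.Gamma (ν + 1) / (Real.Gamma (ν + n + 1) * n.factorial)

/-- term -/
noncomputable def t (ν y : ℝ) (n : ℕ) : ℝ := y ^ n * d ν n

variable {ν : ℝ}

lemma arg_pos (hν : -1 < ν) (n : ℕ) : 0 < ν + n + 1 := by
  have : (0:ℝ) ≤ n := n.cast_nonneg
  linarith

lemma d_pos (hν : -1 < ν) (n : ℕ) : 0 < d ν n := by
  have h1 : 0 < Real.Gamma (ν + 1) := Real.Gamma_pos_of_pos (by linarith)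
  have h2 : 0 < Real.Gamma (ν + n + 1) := Real.Gamma_pos_of_pos (arg_pos hν n)
  have h3 : (0:ℝ) < n.factorial := by exact_mod_cast n.factorial_pos
  exact div_pos h1 (mul_pos h2 h3)

lemma d_zero (hν : -1 < ν) : d ν 0 = 1 := by
  have h1 : Real.Gamma (ν + 1) ≠ 0 := (Real.Gamma_pos_of_pos (by linarith)).ne'
  simp [d, h1]

lemma d_succ (hν : -1 < ν) (n : ℕ) :
    d ν (n + 1) = d ν n / ((ν + n + 1) * (n + 1)) := by
  have hG : Real.Gamma (ν + (n+1) + 1) = (ν + n + 1) * Real.Gamma (ν + n + 1) := by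
    have : ν + (n+1) + 1 = (ν + n + 1) + 1 := by push_cast; ring
    rw [this, Real.Gamma_add_one (arg_pos hν n).ne']
  have h2 : 0 < Real.Gamma (ν + n + 1) := Real.Gamma_pos_of_pos (arg_pos hν n)
  have h3 : (0:ℝ) < n.factorial := by exact_mod_cast n.factorial_pos
  have hfac : ((n+1).factorial : ℝ) = (n+1) * n.factorial := by
    push_cast [Nat.factorial_succ]; ring
  have h4 : (0:ℝ) < (n:ℝ) + 1 := by positivity
  rw [d, d, hfac]
  push_cast
  rw [hG]
  field_simp

lemma d_shift (hν : -1 < ν) (n : ℕ) :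
    d (ν + 1) n = d ν n * ((ν + 1) / (ν + n + 1)) := by
  have hG1 : Real.Gamma (ν + 1 + 1) = (ν + 1) * Real.Gamma (ν + 1) :=
    Real.Gamma_add_one (by linarith)
  have hG2 : Real.Gamma (ν + 1 + n + 1) = (ν + n + 1) * Real.Gamma (ν + n + 1) := by
    have : ν + 1 + n + 1 = (ν + n + 1) + 1 := by ring
    rw [this, Real.Gamma_add_one (arg_pos hν n).ne']
  have h1 : Real.Gamma (ν + 1) ≠ 0 := (Real.Gamma_pos_of_pos (by linarith)).ne'
  have h2 : Real.Gamma (ν + n + 1) ≠ 0 := (Real.Gamma_pos_of_pos (arg_pos hν n)).ne'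
  have h3 : ((n.factorial : ℝ)) ≠ 0 := by exact_mod_cast n.factorial_pos.ne'
  have h4 : (ν + n + 1) ≠ 0 := (arg_pos hν n).ne'
  rw [d, d, hG1, hG2]
  field_simp

lemma t_pos (hν : -1 < ν) {y : ℝ} (hy : 0 < y) (n : ℕ) : 0 < t ν y n :=
  mul_pos (pow_pos hy n) (d_pos hν n)

lemma t_succ (hν : -1 < ν) (y : ℝ) (n : ℕ) :
    t ν y (n + 1) = t ν y n * (y / ((ν + n + 1) * (n + 1))) := by
  rw [t, t, d_succ hν, pow_succ]
  ring

lemma summable_t (hν : -1 < ν) {y : ℝ} (hy : 0 < y) : Summable (t ν y) := by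
  apply summable_of_ratio_norm_eventually_le (r := 1/2) (by norm_num)
  have h : ∀ᶠ n : ℕ in Filter.atTop, (2 * y : ℝ) ≤ n ∧ (-ν : ℝ) ≤ n := by
    filter_upwards [Filter.eventually_ge_atTop ⌈(2*y : ℝ)⌉₊,
      Filter.eventually_ge_atTop ⌈(-ν : ℝ)⌉₊] with n h1 h2
    constructor
    · exact le_trans (Nat.le_ceil _) (by exact_mod_cast h1)
    · exact le_trans (Nat.le_ceil _) (by exact_mod_cast h2)
  filter_upwards [h] with n ⟨h1, h2⟩
  have ht : 0 < t ν y n := t_pos hν hy n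
  have ht1 : 0 < t ν y (n+1) := t_pos hν hy (n+1)
  rw [Real.norm_of_nonneg ht1.le, Real.norm_of_nonneg ht.le, t_succ hν]
  have hd : 2 * y ≤ (ν + n + 1) * (n + 1) := by nlinarith [arg_pos hν n]
  have hDpos : 0 < (ν + n + 1) * ((n:ℝ) + 1) := mul_pos (arg_pos hν n) (by positivity)
  have hr : y / ((ν + n + 1) * ((n:ℝ) + 1)) ≤ 1/2 := by
    rw [div_le_iff₀ hDpos]; linarith
  nlinarith



noncomputable def c (ν : ℝ) (n : ℕ) : ℝ := (ν + 1) / (ν + n + 1)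

lemma besselIn_eq (ν x : ℝ) : besselIn ν x = ∑' n, t ν (x^2/4) n := by
  unfold besselIn t d
  congr 1
  funext n
  have h : (x^2/4)^n = (1/4 : ℝ)^n * x^(2*n) := by
    rw [div_pow, pow_mul]
    ring_nf
    norm_num
  rw [h]
  ring

lemma t_shift (hν : -1 < ν) (y : ℝ) (n : ℕ) :
    t (ν+1) y n = t ν y n * c ν n := by
  rw [t, t, d_shift hν, c]
  ring

lemma besselIn_shift (hν : -1 < ν) (x : ℝ) :
    besselIn (ν+1) x = ∑' n, t ν (x^2/4) n * c ν n := by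
  rw [besselIn_eq]
  exact tsum_congr fun n => t_shift hν _ n

lemma c_pos (hν : -1 < ν) (n : ℕ) : 0 < c ν n :=
  div_pos (by linarith) (arg_pos hν n)

lemma c_le_one (hν : -1 < ν) (n : ℕ) : c ν n ≤ 1 := by
  rw [c, div_le_one (arg_pos hν n)]
  have : (0:ℝ) ≤ n := n.cast_nonneg
  linarith

lemma c_anti (hν : -1 < ν) {m n : ℕ} (h : m ≤ n) : c ν n ≤ c ν m := by
  rw [c, c]
  apply div_le_div_of_nonneg_left (by linarith) (arg_pos hν m)
  have : (m:ℝ) ≤ n := by exact_mod_cast h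
  linarith

lemma t_zero (hν : -1 < ν) (y : ℝ) : t ν y 0 = 1 := by
  rw [t, d_zero hν, pow_zero, mul_one]

lemma summable_tc (hν : -1 < ν) {y : ℝ} (hy : 0 < y) :
    Summable (fun n => t ν y n * c ν n) :=
  (summable_t (by linarith : (-1:ℝ) < ν + 1) hy).congr fun n => (t_shift hν y n)

lemma summable_s (hν : -1 < ν) {y : ℝ} (hy : 0 < y) :
    Summable (fun n => t ν y (n+1)) :=
  (summable_nat_add_iff 1).mpr (summable_t hν hy)

lemma summable_sc (hν : -1 < ν) {y : ℝ} (hy : 0 < y) :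
    Summable (fun n => t ν y (n+1) * c ν (n+1)) :=
  (summable_nat_add_iff 1).mpr (summable_tc hν hy)

lemma summable_t_shift (hν : -1 < ν) {y : ℝ} (hy : 0 < y) (k : ℕ) :
    Summable (fun n : ℕ => t ν y (n+k)) :=
  (summable_nat_add_iff (f := t ν y) k).mpr (summable_t hν hy)

lemma summable_tc_shift (hν : -1 < ν) {y : ℝ} (hy : 0 < y) (k : ℕ) :
    Summable (fun n : ℕ => t ν y (n+k) * c ν (n+k)) :=
  (summable_nat_add_iff (f := fun n => t ν y n * c ν n) k).mpr (summable_tc hν hy)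

/-- `A = ℐ_ν(x) - 1`. -/
noncomputable def A (ν x : ℝ) : ℝ := ∑' n : ℕ, t ν (x^2/4) (n+1)
/-- `B = ℐ_{ν+1}(x) - 1`. -/
noncomputable def B (ν x : ℝ) : ℝ := ∑' n : ℕ, t ν (x^2/4) (n+1) * c ν (n+1)

lemma y_pos {x : ℝ} (hx : 0 < x) : 0 < x^2/4 := by positivity

lemma besselIn_eq_A (hν : -1 < ν) {x : ℝ} (hx : 0 < x) :
    besselIn ν x = 1 + A ν x := by
  rw [besselIn_eq, Summable.tsum_eq_zero_add (summable_t hν (y_pos hx)), t_zero hν, A]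

lemma besselIn_shift_eq_B (hν : -1 < ν) {x : ℝ} (hx : 0 < x) :
    besselIn (ν+1) x = 1 + B ν x := by
  rw [besselIn_shift hν, Summable.tsum_eq_zero_add (summable_tc hν (y_pos hx)), t_zero hν, B]
  congr 1
  rw [c]
  simp
  exact (by linarith : ν + 1 ≠ 0)

lemma A_pos (hν : -1 < ν) {x : ℝ} (hx : 0 < x) : 0 < A ν x :=
  Summable.tsum_pos (summable_s hν (y_pos hx)) (fun n => (t_pos hν (y_pos hx) _).le) 0
    (t_pos hν (y_pos hx) 1)

lemma B_pos (hν : -1 < ν) {x : ℝ} (hx : 0 < x) : 0 < B ν x :=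
  Summable.tsum_pos (summable_sc hν (y_pos hx))
    (fun n => (mul_pos (t_pos hν (y_pos hx) _) (c_pos hν _)).le) 0
    (mul_pos (t_pos hν (y_pos hx) 1) (c_pos hν 1))


lemma ineq_iff (hν : -1 < ν) {x : ℝ} (hx : 0 < x) (r : ℝ) :
    ((1 - r) / besselIn (ν+1) x + r * besselIn ν x / besselIn (ν+1) x > 1) ↔
      B ν x < r * A ν x := by
  have hA := besselIn_eq_A hν hx
  have hB := besselIn_shift_eq_B hν hx
  have hJ' : 0 < besselIn (ν+1) x := by rw [hB]; linarith [B_pos hν hx]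
  rw [← add_div, gt_iff_lt, lt_div_iff₀ hJ', one_mul, hA, hB]
  constructor <;> intro h <;> nlinarith

lemma ineq_iff2 (hν : -1 < ν) {x : ℝ} (hx : 0 < x) (r : ℝ) :
    (1 > (1 - r) / besselIn (ν+1) x + r * besselIn ν x / besselIn (ν+1) x) ↔
      r * A ν x < B ν x := by
  have hA := besselIn_eq_A hν hx
  have hB := besselIn_shift_eq_B hν hx
  have hJ' : 0 < besselIn (ν+1) x := by rw [hB]; linarith [B_pos hν hx]
  rw [← add_div, gt_iff_lt, div_lt_one hJ', hA, hB]
  constructor <;> intro h <;> nlinarith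

lemma c_one (ν : ℝ) : c ν 1 = (ν+1)/(ν+2) := by
  rw [c]; norm_num; congr 1; ring

lemma forward_p (hν : -1 < ν) {p x : ℝ} (hp : (ν+1)/(ν+2) ≤ p) (hx : 0 < x) :
    B ν x < p * A ν x := by
  have hy0 : 0 < x^2/4 := y_pos hx
  have h1 : B ν x < ∑' n : ℕ, t ν (x^2/4) (n+1) * c ν 1 := by
    rw [B]
    apply Summable.tsum_lt_tsum (i := 1)
    · intro n
      exact mul_le_mul_of_nonneg_left (c_anti hν (by omega : 1 ≤ n+1))
        (t_pos hν hy0 _).le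
    · have hc : c ν 2 < c ν 1 := by
        rw [c, c]
        apply div_lt_div_of_pos_left (by linarith) (by push_cast; linarith)
        push_cast; linarith
      exact mul_lt_mul_of_pos_left hc (t_pos hν hy0 2)
    · exact summable_sc hν hy0
    · exact (summable_s hν hy0).mul_right _
  rw [tsum_mul_right] at h1
  calc B ν x < A ν x * c ν 1 := h1
    _ ≤ p * A ν x := by
        rw [c_one, mul_comm]
        exact mul_le_mul_of_nonneg_right hp (A_pos hν hx).le

lemma forward_q (hν : -1 < ν) {q x : ℝ} (hq : q ≤ 0) (hx : 0 < x) :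
    q * A ν x < B ν x := by
  have := B_pos hν hx
  have hA := A_pos hν hx
  nlinarith


lemma d_one (hν : -1 < ν) : d ν 1 * (ν + 1) = 1 := by
  have h := d_succ hν 0
  rw [d_zero hν] at h
  rw [show ((0:ℕ)+1 : ℕ) = 1 from rfl] at h
  rw [h]
  push_cast
  field_simp
  rw [add_zero, zero_add]
  exact div_self (by linarith)

lemma converse_p (hν : -1 < ν) {p : ℝ}
    (h : ∀ x : ℝ, 0 < x → B ν x < p * A ν x) : (ν+1)/(ν+2) ≤ p := by
  by_contra hp
  push_neg at hp
  rcases le_or_gt p 0 with hp0 | hp0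
  · have h1 := h 1 one_pos
    have hA := A_pos hν one_pos
    have hB := B_pos hν one_pos
    nlinarith
  · -- 0 < p < (ν+1)/(ν+2)
    have hν1 : (0:ℝ) < ν + 1 := by linarith
    have hdsum : Summable (d ν) :=
      (summable_t hν one_pos).congr fun n => by rw [t, one_pow, one_mul]
    have hMsum : Summable (fun n : ℕ => d ν (n+2)) := (summable_nat_add_iff 2).mpr hdsum
    set M := ∑' n : ℕ, d ν (n+2) with hM
    have hM0 : 0 < M := Summable.tsum_pos hMsum (fun n => (d_pos hν _).le) 0 (d_pos hν 2)
    have hR : 0 < (ν+1)/(ν+2) - p := by linarith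
    have hDpos : 0 < (ν+1)*p*(M+1) := mul_pos (mul_pos hν1 hp0) (by linarith)
    set y := min 1 (((ν+1)/(ν+2) - p)/((ν+1)*p*(M+1))) with hyd
    have hy0 : 0 < y := lt_min one_pos (div_pos hR hDpos)
    have hy1 : y ≤ 1 := min_le_left _ _
    set x := 2 * Real.sqrt y with hxd
    have hx : 0 < x := by positivity
    have hxy : x^2/4 = y := by
      rw [hxd, mul_pow, Real.sq_sqrt hy0.le]; ring
    -- bound A from above
    have hAe : A ν x = t ν y 1 + ∑' n : ℕ, t ν y (n+2) := by
      rw [A]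
      simp_rw [hxy]
      rw [Summable.tsum_eq_zero_add (summable_s hν hy0)]
    have htail : ∑' n : ℕ, t ν y (n+2) ≤ y^2 * M := by
      have e : y^2 * M = ∑' n : ℕ, y^2 * d ν (n+2) := tsum_mul_left.symm
      rw [e]
      refine Summable.tsum_le_tsum (fun n => ?_) (summable_t_shift hν hy0 2) (hMsum.mul_left _)
      rw [t]
      have hpow : y^(n+2) ≤ y^2 := by
        calc y^(n+2) = y^2 * y^n := by ring
          _ ≤ y^2 * 1 := mul_le_mul_of_nonneg_left (pow_le_one₀ hy0.le hy1) (sq_nonneg y)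
          _ = y^2 := mul_one _
      exact mul_le_mul_of_nonneg_right hpow (d_pos hν _).le
    have hAle : A ν x ≤ y * d ν 1 + y^2 * M := by
      rw [hAe, t, pow_one]
      linarith
    -- bound B from below
    have hBge : (ν+1)/(ν+2) * (y * d ν 1) ≤ B ν x := by
      have hle := Summable.le_tsum (summable_sc hν (y_pos hx)) 0
        (fun n _ => (mul_pos (t_pos hν (y_pos hx) _) (c_pos hν _)).le)
      rw [← B] at hle
      calc (ν+1)/(ν+2) * (y * d ν 1) = t ν (x^2/4) (0+1) * c ν (0+1) := by
            rw [hxy, t, pow_one, show ((0:ℕ)+1 : ℕ) = 1 from rfl, c_one]; ring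
        _ ≤ B ν x := hle
    -- arithmetic
    have h5 : y * ((ν+1)*p*(M+1)) ≤ (ν+1)/(ν+2) - p := by
      have hmin := min_le_right 1 (((ν+1)/(ν+2) - p)/((ν+1)*p*(M+1)))
      calc y * ((ν+1)*p*(M+1))
          ≤ (((ν+1)/(ν+2) - p)/((ν+1)*p*(M+1))) * ((ν+1)*p*(M+1)) :=
            mul_le_mul_of_nonneg_right hmin hDpos.le
        _ = (ν+1)/(ν+2) - p := div_mul_cancel₀ _ hDpos.ne'
    have h6 : p*y*M*(ν+1) ≤ (ν+1)/(ν+2) - p := by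
      nlinarith [mul_pos (mul_pos hy0 hν1) hp0]
    have h7 : p*y^2*M*(ν+1) ≤ ((ν+1)/(ν+2) - p)*y := by
      nlinarith [mul_le_mul_of_nonneg_right h6 hy0.le]
    have h9 : p*y^2*M ≤ ((ν+1)/(ν+2) - p)*(y * d ν 1) := by
      have h8 := mul_le_mul_of_nonneg_right h7 (d_pos hν 1).le
      calc p*y^2*M = p*y^2*M*(d ν 1 * (ν+1)) := by rw [d_one hν, mul_one]
        _ = p*y^2*M*(ν+1) * d ν 1 := by ring
        _ ≤ ((ν+1)/(ν+2) - p)*y * d ν 1 := h8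
        _ = ((ν+1)/(ν+2) - p)*(y * d ν 1) := by ring
    have hfinal : p * A ν x ≤ B ν x := by
      have hstep := mul_le_mul_of_nonneg_left hAle hp0.le
      nlinarith [hBge, h9]
    exact absurd (h x hx) (not_lt.mpr hfinal)

lemma converse_q (hν : -1 < ν) {q : ℝ}
    (h : ∀ x : ℝ, 0 < x → q * A ν x < B ν x) : q ≤ 0 := by
  by_contra hq
  push_neg at hq
  have hν1 : (0:ℝ) < ν + 1 := by linarith
  set N := ⌈2*(ν+1)/q⌉₊ + 1 with hN
  have hNge : 2*(ν+1)/q ≤ (N:ℝ) := by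
    have := Nat.le_ceil (2*(ν+1)/q)
    have hcast : ((⌈2*(ν+1)/q⌉₊ : ℝ)) ≤ (N:ℝ) := by
      rw [hN]; push_cast; linarith
    linarith
  have hNc : c ν N ≤ q/2 := by
    rw [c, div_le_div_iff₀ (arg_pos hν N) (by norm_num : (0:ℝ) < 2)]
    have h1 : 2*(ν+1) ≤ q * N := by
      rw [div_le_iff₀ hq] at hNge; linarith
    nlinarith
  set K := ∑ n ∈ Finset.range N, d ν (n+1) with hK
  have hK0 : 0 < K :=
    Finset.sum_pos (fun n _ => d_pos hν _) (Finset.nonempty_range_iff.mpr (by omega))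
  have hdN : 0 < d ν (N+1) := d_pos hν _
  set y := max 1 (2*K/(q * d ν (N+1))) with hyd
  have hy1 : 1 ≤ y := le_max_left _ _
  have hy0 : 0 < y := lt_of_lt_of_le one_pos hy1
  set x := 2 * Real.sqrt y with hxd
  have hx : 0 < x := by positivity
  have hxy : x^2/4 = y := by
    rw [hxd, mul_pow, Real.sq_sqrt hy0.le]; ring
  have sA : Summable (fun n : ℕ => t ν y (n+1)) := summable_s hν hy0
  have sB : Summable (fun n : ℕ => t ν y (n+1) * c ν (n+1)) := summable_sc hν hy0
  -- splits
  have hAsplit : A ν x = (∑ n ∈ Finset.range N, t ν y (n+1)) + ∑' n : ℕ, t ν y (n+N+1) := by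
    rw [A]
    simp_rw [hxy]
    exact (Summable.sum_add_tsum_nat_add N sA).symm
  have hBsplit : B ν x = (∑ n ∈ Finset.range N, t ν y (n+1) * c ν (n+1))
      + ∑' n : ℕ, t ν y (n+N+1) * c ν (n+N+1) := by
    rw [B]
    simp_rw [hxy]
    exact (Summable.sum_add_tsum_nat_add N sB).symm
  have htNA : t ν y (N+1) ≤ A ν x := by
    rw [A]; simp_rw [hxy]
    exact Summable.le_tsum sA N (fun n _ => (t_pos hν hy0 _).le)
  have htailA : ∑' n : ℕ, t ν y (n+N+1) ≤ A ν x := by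
    rw [hAsplit]
    have : 0 ≤ ∑ n ∈ Finset.range N, t ν y (n+1) :=
      Finset.sum_nonneg fun n _ => (t_pos hν hy0 _).le
    linarith
  -- head bound
  have hhead : (∑ n ∈ Finset.range N, t ν y (n+1) * c ν (n+1)) ≤ y^N * K := by
    rw [hK, Finset.mul_sum]
    apply Finset.sum_le_sum
    intro n hn
    have hn' : n + 1 ≤ N := by
      have := Finset.mem_range.mp hn; omega
    calc t ν y (n+1) * c ν (n+1) ≤ t ν y (n+1) * 1 :=
          mul_le_mul_of_nonneg_left (c_le_one hν _) (t_pos hν hy0 _).le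
      _ = y^(n+1) * d ν (n+1) := by rw [mul_one, t]
      _ ≤ y^N * d ν (n+1) :=
          mul_le_mul_of_nonneg_right (pow_le_pow_right₀ hy1 hn') (d_pos hν _).le
  have h5 : 2*K/(q * d ν (N+1)) ≤ y := le_max_right _ _
  have h6 : 2*K ≤ y * (q * d ν (N+1)) := by
    rw [div_le_iff₀ (mul_pos hq hdN)] at h5; linarith
  have h7 : y^N * K ≤ q/2 * t ν y (N+1) := by
    rw [t, pow_succ]
    have h6' : K ≤ q/2 * (y * d ν (N+1)) := by linarith
    calc y^N * K ≤ y^N * (q/2 * (y * d ν (N+1))) :=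
          mul_le_mul_of_nonneg_left h6' (pow_pos hy0 N).le
      _ = q/2 * (y^N * y * d ν (N+1)) := by ring
  -- tail bound
  have htail : ∑' n : ℕ, t ν y (n+N+1) * c ν (n+N+1) ≤ q/2 * A ν x := by
    have step1 : ∑' n : ℕ, t ν y (n+N+1) * c ν (n+N+1)
        ≤ ∑' n : ℕ, t ν y (n+N+1) * (q/2) := by
      refine Summable.tsum_le_tsum (fun n => ?_) (summable_tc_shift hν hy0 (N+1))
        ((summable_t_shift hν hy0 (N+1)).mul_right _)
      exact mul_le_mul_of_nonneg_left ((c_anti hν (by omega : N ≤ n+N+1)).trans hNc)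
        (t_pos hν hy0 _).le
    rw [tsum_mul_right] at step1
    calc ∑' n : ℕ, t ν y (n+N+1) * c ν (n+N+1)
        ≤ (∑' n : ℕ, t ν y (n+N+1)) * (q/2) := step1
      _ ≤ A ν x * (q/2) := mul_le_mul_of_nonneg_right htailA (by linarith)
      _ = q/2 * A ν x := by ring
  have hfinal : B ν x ≤ q * A ν x := by
    have hA0 := A_pos hν hx
    have c1 : (∑ n ∈ Finset.range N, t ν y (n+1) * c ν (n+1)) ≤ q/2 * A ν x := by
      calc _ ≤ y^N * K := hhead
        _ ≤ q/2 * t ν y (N+1) := h7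
        _ ≤ q/2 * A ν x := mul_le_mul_of_nonneg_left htNA (by linarith)
    rw [hBsplit]
    linarith
  exact absurd (h x hx) (not_lt.mpr hfinal)

end BesselAux

theorem besselI_huygens_reciprocal_iff (ν p q : ℝ) (hν : -1 < ν) :
    (∀ x : ℝ, 0 < x →
      (1 - p) / besselIn (ν + 1) x + p * besselIn ν x / besselIn (ν + 1) x > 1 ∧
      1 > (1 - q) / besselIn (ν + 1) x + q * besselIn ν x / besselIn (ν + 1) x) ↔
    (p ≥ (ν + 1) / (ν + 2) ∧ q ≤ 0) := by
  constructor
  · intro h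
    refine ⟨BesselAux.converse_p hν fun x hx => ?_, BesselAux.converse_q hν fun x hx => ?_⟩
    · exact (BesselAux.ineq_iff hν hx p).mp (h x hx).1
    · exact (BesselAux.ineq_iff2 hν hx q).mp (h x hx).2
  · rintro ⟨hp, hq⟩ x hx
    exact ⟨(BesselAux.ineq_iff hν hx p).mpr (BesselAux.forward_p hν hp hx),
      (BesselAux.ineq_iff2 hν hx q).mpr (BesselAux.forward_q hν hq hx)⟩
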